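/- Let H₁, H₂ be separable complex Hilbert spaces, H = H₁ ⊗ H₂, (X, μ) = (X₁ × X₂, μ₁ ⊗ μ₂) the product of measure spaces with σ-finite positive measures, and let F = F₁ ⊗ F₂ be a continuous frame for H with respect to (X, μ), where F₁, F₂ are continuous frames for H₁, H₂. Then: (i) for simple tensors, (T_F^*(f₁ ⊗ f₂))(x₁,x₂) = ⟨f₁, F₁(x₁)⟩⟨f₂, F₂(x₂)⟩; (ii) the frame operator factorizes as S_{F₁⊗F₂} = S_{F₁} ⊗ S_{F₂}, where S_{F₁} ⊗ S_{F₂} is the unique bounded operator on H₁ ⊗ H₂ satisfying (S_{F₁} ⊗ S_{F₂})(u ⊗ v) = S_{F₁}u ⊗ S_{F₂}v; (iii) the canonical dual frame of F₁ ⊗ F₂ is S_{F₁}^{-1}F₁ ⊗ S_{F₂}^{-1}F₂, i.e. S_{F₁⊗F₂}^{-1}(F₁ ⊗ F₂)(x₁,x₂) = (S_{F₁}^{-1}F₁(x₁)) ⊗ (S_{F₂}^{-1}F₂(x₂)). -/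

import Mathlib

open MeasureTheory ENNReal

noncomputable section

namespace ContFrame

variable {X : Type*} {H : Type*}

def pinner [NormedAddCommGroup H] [InnerProductSpace ℂ H] (f g : H) : ℂ :=
  @inner ℂ _ _ g f

def frameInt [MeasurableSpace X] [NormedAddCommGroup H] [InnerProductSpace ℂ H]
    (μ : Measure X) (F : X → H) (f : H) : ℝ≥0∞ :=
  ∫⁻ x, (‖pinner f (F x)‖₊ : ℝ≥0∞) ^ 2 ∂μ

def WeaklyMeasurable [MeasurableSpace X] [NormedAddCommGroup H] [InnerProductSpace ℂ H]
    (μ : Measure X) (F : X → H) : Prop :=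
  ∀ f : H, AEMeasurable (fun x => pinner f (F x)) μ

def IsBesselMapping [MeasurableSpace X] [NormedAddCommGroup H] [InnerProductSpace ℂ H]
    (μ : Measure X) (F : X → H) (B : ℝ≥0∞) : Prop :=
  B < ⊤ ∧ WeaklyMeasurable μ F ∧
    ∀ f : H, frameInt μ F f ≤ B * (‖f‖₊ : ℝ≥0∞) ^ 2

def IsContinuousFrame [MeasurableSpace X] [NormedAddCommGroup H] [InnerProductSpace ℂ H]
    (μ : Measure X) (F : X → H) (A B : ℝ≥0∞) : Prop :=
  0 < A ∧ A ≤ B ∧ B < ⊤ ∧ WeaklyMeasurable μ F ∧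
    ∀ f : H, A * (‖f‖₊ : ℝ≥0∞) ^ 2 ≤ frameInt μ F f ∧
      frameInt μ F f ≤ B * (‖f‖₊ : ℝ≥0∞) ^ 2

structure HilbertTensorProduct (H₁ H₂ H : Type*)
    [NormedAddCommGroup H₁] [InnerProductSpace ℂ H₁]
    [NormedAddCommGroup H₂] [InnerProductSpace ℂ H₂]
    [NormedAddCommGroup H] [InnerProductSpace ℂ H] where
  tmul : H₁ →ₗ[ℂ] H₂ →ₗ[ℂ] H
  inner_tmul : ∀ (a c : H₁) (b d : H₂),
    (inner ℂ (tmul a b) (tmul c d) : ℂ) = (inner ℂ a c : ℂ) * (inner ℂ b d : ℂ)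
  dense_span : Dense (↑(Submodule.span ℂ {z : H | ∃ a b, z = tmul a b}) : Set H)

def IsSynthesisOperator {X H : Type*} [MeasurableSpace X]
    [NormedAddCommGroup H] [InnerProductSpace ℂ H] [CompleteSpace H]
    (μ : Measure X) (F : X → H) (T : Lp ℂ 2 μ →L[ℂ] H) : Prop :=
  ∀ f : H, (ContinuousLinearMap.adjoint T f : X → ℂ) =ᵐ[μ] fun x => pinner f (F x)

/-- If `⟪h, z⟫ = 0` for all simple tensors `z`, then `h = 0`. -/
lemma eq_zero_of_inner_tmul {H₁ H₂ H : Type*}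
    [NormedAddCommGroup H₁] [InnerProductSpace ℂ H₁]
    [NormedAddCommGroup H₂] [InnerProductSpace ℂ H₂]
    [NormedAddCommGroup H] [InnerProductSpace ℂ H]
    (tp : HilbertTensorProduct H₁ H₂ H) (h : H)
    (h0 : ∀ (a : H₁) (b : H₂), (inner ℂ h (tp.tmul a b) : ℂ) = 0) : h = 0 := by
  have hker : (Submodule.span ℂ {z : H | ∃ a b, z = tp.tmul a b} : Set H) ⊆
      (LinearMap.ker ((innerSL ℂ h : H →L[ℂ] ℂ) : H →ₗ[ℂ] ℂ) : Set H) := by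
    have : Submodule.span ℂ {z : H | ∃ a b, z = tp.tmul a b} ≤
        LinearMap.ker ((innerSL ℂ h : H →L[ℂ] ℂ) : H →ₗ[ℂ] ℂ) := by
      apply Submodule.span_le.mpr
      rintro z ⟨a, b, rfl⟩
      exact h0 a b
    exact this
  have hclosed : IsClosed ((LinearMap.ker ((innerSL ℂ h : H →L[ℂ] ℂ) : H →ₗ[ℂ] ℂ) : Set H)) :=
    ContinuousLinearMap.isClosed_ker (innerSL ℂ h : H →L[ℂ] ℂ)
  have : (Set.univ : Set H) ⊆ (LinearMap.ker ((innerSL ℂ h : H →L[ℂ] ℂ) : H →ₗ[ℂ] ℂ) : Set H) := by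
    rw [← tp.dense_span.closure_eq]
    exact hclosed.closure_subset_iff.mpr hker
  have hh : (inner ℂ h h : ℂ) = 0 := this (Set.mem_univ h)
  exact inner_self_eq_zero.mp hh

theorem tensor_frame_operator
    {X₁ X₂ : Type*} [MeasurableSpace X₁] [MeasurableSpace X₂]
    {H₁ H₂ H : Type*}
    [NormedAddCommGroup H₁] [InnerProductSpace ℂ H₁] [CompleteSpace H₁]
      [TopologicalSpace.SeparableSpace H₁]
    [NormedAddCommGroup H₂] [InnerProductSpace ℂ H₂] [CompleteSpace H₂]
      [TopologicalSpace.SeparableSpace H₂]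
    [NormedAddCommGroup H] [InnerProductSpace ℂ H] [CompleteSpace H]
      [TopologicalSpace.SeparableSpace H]
    (μ₁ : Measure X₁) (μ₂ : Measure X₂) [SigmaFinite μ₁] [SigmaFinite μ₂]
    (tp : HilbertTensorProduct H₁ H₂ H)
    (F₁ : X₁ → H₁) (F₂ : X₂ → H₂) (A₁ B₁ A₂ B₂ A B : ℝ≥0∞)
    (hF₁ : IsContinuousFrame μ₁ F₁ A₁ B₁)
    (hF₂ : IsContinuousFrame μ₂ F₂ A₂ B₂)
    (hF : IsContinuousFrame (μ₁.prod μ₂)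
      (fun x : X₁ × X₂ => tp.tmul (F₁ x.1) (F₂ x.2)) A B)
    (TF : Lp ℂ 2 (μ₁.prod μ₂) →L[ℂ] H)
    (hTF : IsSynthesisOperator (μ₁.prod μ₂)
      (fun x : X₁ × X₂ => tp.tmul (F₁ x.1) (F₂ x.2)) TF)
    (TF₁ : Lp ℂ 2 μ₁ →L[ℂ] H₁) (hTF₁ : IsSynthesisOperator μ₁ F₁ TF₁)
    (TF₂ : Lp ℂ 2 μ₂ →L[ℂ] H₂) (hTF₂ : IsSynthesisOperator μ₂ F₂ TF₂) :
    (∀ (f₁ : H₁) (f₂ : H₂),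
      (ContinuousLinearMap.adjoint TF (tp.tmul f₁ f₂) : X₁ × X₂ → ℂ)
        =ᵐ[μ₁.prod μ₂] fun x => pinner f₁ (F₁ x.1) * pinner f₂ (F₂ x.2)) ∧
    (∀ (u : H₁) (v : H₂),
      (TF.comp (ContinuousLinearMap.adjoint TF)) (tp.tmul u v)
        = tp.tmul ((TF₁.comp (ContinuousLinearMap.adjoint TF₁)) u)
            ((TF₂.comp (ContinuousLinearMap.adjoint TF₂)) v)) ∧
    (∀ (Sinv : H →L[ℂ] H) (S₁inv : H₁ →L[ℂ] H₁) (S₂inv : H₂ →L[ℂ] H₂),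
      Sinv.comp (TF.comp (ContinuousLinearMap.adjoint TF)) = ContinuousLinearMap.id ℂ H →
      (TF.comp (ContinuousLinearMap.adjoint TF)).comp Sinv = ContinuousLinearMap.id ℂ H →
      S₁inv.comp (TF₁.comp (ContinuousLinearMap.adjoint TF₁)) = ContinuousLinearMap.id ℂ H₁ →
      (TF₁.comp (ContinuousLinearMap.adjoint TF₁)).comp S₁inv = ContinuousLinearMap.id ℂ H₁ →
      S₂inv.comp (TF₂.comp (ContinuousLinearMap.adjoint TF₂)) = ContinuousLinearMap.id ℂ H₂ →
      (TF₂.comp (ContinuousLinearMap.adjoint TF₂)).comp S₂inv = ContinuousLinearMap.id ℂ H₂ →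
      ∀ (x₁ : X₁) (x₂ : X₂),
        Sinv (tp.tmul (F₁ x₁) (F₂ x₂)) = tp.tmul (S₁inv (F₁ x₁)) (S₂inv (F₂ x₂))) := by
  -- Part (i)
  have part1 : ∀ (f₁ : H₁) (f₂ : H₂),
      (ContinuousLinearMap.adjoint TF (tp.tmul f₁ f₂) : X₁ × X₂ → ℂ)
        =ᵐ[μ₁.prod μ₂] fun x => pinner f₁ (F₁ x.1) * pinner f₂ (F₂ x.2) := by
    intro f₁ f₂
    refine (hTF (tp.tmul f₁ f₂)).trans (Filter.EventuallyEq.of_eq ?_)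
    funext x
    simp only [pinner, tp.inner_tmul]
  -- Part (ii)
  have part2 : ∀ (u : H₁) (v : H₂),
      (TF.comp (ContinuousLinearMap.adjoint TF)) (tp.tmul u v)
        = tp.tmul ((TF₁.comp (ContinuousLinearMap.adjoint TF₁)) u)
            ((TF₂.comp (ContinuousLinearMap.adjoint TF₂)) v) := by
    intro u v
    rw [← sub_eq_zero]
    apply eq_zero_of_inner_tmul tp
    intro a b
    rw [inner_sub_left, sub_eq_zero]
    -- LHS inner
    have lhs : (inner ℂ ((TF.comp (ContinuousLinearMap.adjoint TF)) (tp.tmul u v))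
        (tp.tmul a b) : ℂ)
        = (inner ℂ (TF₁ (ContinuousLinearMap.adjoint TF₁ u)) a : ℂ)
          * (inner ℂ (TF₂ (ContinuousLinearMap.adjoint TF₂ v)) b : ℂ) := by
      have h1 : (inner ℂ ((TF.comp (ContinuousLinearMap.adjoint TF)) (tp.tmul u v))
          (tp.tmul a b) : ℂ)
          = inner ℂ (ContinuousLinearMap.adjoint TF (tp.tmul u v))
              (ContinuousLinearMap.adjoint TF (tp.tmul a b)) := by
        simp only [ContinuousLinearMap.comp_apply]
        rw [← ContinuousLinearMap.adjoint_inner_right]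
      rw [h1, MeasureTheory.L2.inner_def]
      have h2 : ∫ x, (inner ℂ ((ContinuousLinearMap.adjoint TF (tp.tmul u v) : Lp ℂ 2 (μ₁.prod μ₂)) x)
            ((ContinuousLinearMap.adjoint TF (tp.tmul a b) : Lp ℂ 2 (μ₁.prod μ₂)) x) : ℂ)
            ∂(μ₁.prod μ₂)
          = ∫ x : X₁ × X₂, ((starRingEnd ℂ) (pinner u (F₁ x.1)) * pinner a (F₁ x.1))
              * ((starRingEnd ℂ) (pinner v (F₂ x.2)) * pinner b (F₂ x.2)) ∂(μ₁.prod μ₂) := by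
        apply integral_congr_ae
        filter_upwards [part1 u v, part1 a b] with x hx1 hx2
        rw [hx1, hx2]
        simp only [RCLike.inner_apply, map_mul]
        ring
      rw [h2]
      rw [integral_prod_mul (f := fun x₁ => (starRingEnd ℂ) (pinner u (F₁ x₁)) * pinner a (F₁ x₁))
        (g := fun x₂ => (starRingEnd ℂ) (pinner v (F₂ x₂)) * pinner b (F₂ x₂))]
      congr 1
      · rw [← ContinuousLinearMap.adjoint_inner_right, MeasureTheory.L2.inner_def]
        apply integral_congr_ae
        filter_upwards [hTF₁ u, hTF₁ a] with x hx1 hx2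
        rw [hx1, hx2, RCLike.inner_apply, mul_comm]
      · rw [← ContinuousLinearMap.adjoint_inner_right, MeasureTheory.L2.inner_def]
        apply integral_congr_ae
        filter_upwards [hTF₂ v, hTF₂ b] with x hx1 hx2
        rw [hx1, hx2, RCLike.inner_apply, mul_comm]
    rw [lhs]
    simp only [ContinuousLinearMap.comp_apply]
    rw [tp.inner_tmul]
  refine ⟨part1, part2, ?_⟩
  -- Part (iii)
  intro Sinv S₁inv S₂inv hL hR hL₁ hR₁ hL₂ hR₂ x₁ x₂
  have key := part2 (S₁inv (F₁ x₁)) (S₂inv (F₂ x₂))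
  have e1 : (TF₁.comp (ContinuousLinearMap.adjoint TF₁)) (S₁inv (F₁ x₁)) = F₁ x₁ := by
    have := congrArg (fun T => T (F₁ x₁)) hR₁
    simpa using this
  have e2 : (TF₂.comp (ContinuousLinearMap.adjoint TF₂)) (S₂inv (F₂ x₂)) = F₂ x₂ := by
    have := congrArg (fun T => T (F₂ x₂)) hR₂
    simpa using this
  rw [e1, e2] at key
  have := congrArg Sinv key
  rw [← ContinuousLinearMap.comp_apply, hL] at this
  simpa using this.symm

end ContFrame
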